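/- Let R be a commutative ring, x, y ∈ R, and let λ = (λ_1,…,λ_k) be a partition with λ_{k+1} := 0. Then Σ_{(C_1,…,C_k)} x^{Σ_{i=1}^k max(C_i − λ_{i+1}, 0)} · y^{#\{ i : C_i = 0 \}} = det( M_{ij} )_{1 ≤ i,j ≤ k}, where the sum on the left is over all integer tuples (C_1,…,C_k) with λ_i ≥ C_i ≥ C_{i+1} ≥ 0 for all i (equivalently, all partitions with at most k parts contained in λ), and M_{ij} = C(λ_{j+1}, j−i+1) + y·C(λ_{j+1}, j−i) + Σ_{p=1}^{λ_j − λ_{j+1}} x^p ( C(λ_{j+1}+p−1, j−i) + y·C(λ_{j+1}+p−1, j−i−1) ). -/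

import Mathlib

open Finset

/-- Binomial coefficient `C(a, b)` with integer lower argument; it is `0` when
`b < 0` or `b > a`. -/
def chooseZ (a : ℕ) (b : ℤ) : ℕ := if 0 ≤ b then a.choose b.toNat else 0

namespace Stmt9Aux

lemma chooseZ_coe (n r : ℕ) : chooseZ n (r : ℤ) = n.choose r := by
  simp [chooseZ]

lemma chooseZ_neg (n : ℕ) {z : ℤ} (h : z < 0) : chooseZ n z = 0 := by
  simp [chooseZ, not_le.2 h]

lemma hockey (b r : ℕ) : ∑ t ∈ Icc 1 b, (t - 1).choose r = b.choose (r + 1) := by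
  induction b with
  | zero => simp
  | succ b ih =>
    rw [show Icc 1 (b + 1) = insert (b + 1) (Icc 1 b) by ext t; simp [mem_Icc]; omega,
      Finset.sum_insert (by simp), ih]
    simp [Nat.choose_succ_succ b r, Nat.add_comm]

variable {R : Type} [CommRing R]

/-- weight of a part equal to `j` at position `m` (1-based). -/
def wgt (x y : R) (a : ℕ → ℕ) (m j : ℕ) : R :=
  x ^ (j - a (m + 1)) * (if j = 0 then y else 1)

/-- sums over weak chains (partitions inside `a`), bottom part `≥ c`. -/
def BB (w : ℕ → ℕ → R) (b : ℕ → ℕ) : ℕ → ℕ → R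
  | 0, _ => 1
  | m + 1, c => ∑ j ∈ Finset.Icc c (b (m + 1)), w (m + 1) j * BB w b m j

/-- sums over strict chains of length `r` below `j`, weights at positions `m, m-1, …`. -/
def psi (x y : R) (a : ℕ → ℕ) : ℕ → ℕ → ℕ → R
  | 0, _, _ => 1
  | r + 1, m, j => ∑ t ∈ Finset.range j, wgt x y a m t * psi x y a r (m - 1) t

lemma psi_zero (x y : R) (a : ℕ → ℕ) (r m : ℕ) :
    psi x y a r m 0 = if r = 0 then 1 else 0 := by
  cases r <;> simp [psi]

/-- closed form for `psi`. -/
def Phi (x y : R) (a : ℕ → ℕ) (m j r : ℕ) : R :=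
  (chooseZ (min (j - 1) (a (m + 1))) (r : ℤ) : R)
    + y * (chooseZ (min (j - 1) (a (m + 1))) ((r : ℤ) - 1) : R)
    + ∑ p ∈ Finset.Icc 1 (j - 1 - a (m + 1)),
        x ^ p * ((chooseZ (a (m + 1) + p - 1) ((r : ℤ) - 1) : R)
          + y * (chooseZ (a (m + 1) + p - 1) ((r : ℤ) - 2) : R))

lemma psi_eq_Phi (x y : R) (a : ℕ → ℕ) (ha : ∀ m, 1 ≤ m → a (m + 1) ≤ a m) :
    ∀ r m j, r ≤ m → 1 ≤ j → j ≤ a m + 1 → psi x y a r m j = Phi x y a m j r := by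
  intro r
  induction r with
  | zero =>
    intro m j _ _ _
    simp [psi, Phi, chooseZ]
  | succ r ih =>
    intro m j hrm hj hja
    have hm : 1 ≤ m := by omega
    have ham : a (m + 1) ≤ a m := ha m hm
    -- inner values
    have hinner : ∀ t ∈ Icc 1 (j - 1),
        wgt x y a m t * psi x y a r (m - 1) t
          = x ^ (t - a (m + 1)) * (((t - 1).choose r : R)
              + y * (chooseZ (t - 1) ((r : ℤ) - 1) : R)) := by
      intro t ht
      rw [mem_Icc] at ht
      have ht1 : 1 ≤ t := ht.1
      have htam : t ≤ a m := by omega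
      have hpsi : psi x y a r (m - 1) t
          = ((t - 1).choose r : R) + y * (chooseZ (t - 1) ((r : ℤ) - 1) : R) := by
        rcases Nat.eq_zero_or_pos r with hr0 | hrpos
        · subst hr0
          rw [show ((0 : ℕ) : ℤ) - 1 = (-1 : ℤ) by norm_num, chooseZ_neg _ (by norm_num)]
          simp [psi]
        · have hm1 : 1 ≤ m - 1 := by omega
          have ham1 : a m ≤ a (m - 1) := by
            have h2 := ha (m - 1) hm1
            rwa [show m - 1 + 1 = m by omega] at h2
          have := ih (m - 1) t (by omega) ht1 (by omega)
          rw [this, Phi]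
          rw [show m - 1 + 1 = m by omega]
          rw [show min (t - 1) (a m) = t - 1 by omega, show t - 1 - a m = 0 by omega]
          simp [chooseZ_coe]
      rw [hpsi, wgt]
      rw [show (if t = 0 then y else (1 : R)) = 1 by simp [show t ≠ 0 by omega], mul_one]
    -- split off t = 0
    rw [psi, show Finset.range j = insert 0 (Icc 1 (j - 1)) by
      ext t; simp [mem_Icc, Finset.mem_range]; omega,
      Finset.sum_insert (by simp)]
    rw [Finset.sum_congr rfl hinner]
    have h0 : wgt x y a m 0 * psi x y a r (m - 1) 0
        = y * (if r = 0 then 1 else 0) := by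
      rw [psi_zero, wgt]
      simp
    rw [h0]
    -- split the interval at min (j-1) (a (m+1))
    have hsplit : Icc 1 (j - 1)
        = Icc 1 (min (j - 1) (a (m + 1))) ∪ Icc (a (m + 1) + 1) (j - 1) := by
      ext t; simp [mem_Icc, Finset.mem_union]; omega
    have hdisj : Disjoint (Icc 1 (min (j - 1) (a (m + 1)))) (Icc (a (m + 1) + 1) (j - 1)) := by
      rw [Finset.disjoint_left]
      intro t h1 h2
      rw [mem_Icc] at h1 h2
      omega
    rw [hsplit, Finset.sum_union hdisj]
    have hfirst : ∑ t ∈ Icc 1 (min (j - 1) (a (m + 1))), x ^ (t - a (m + 1))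
          * (((t - 1).choose r : R) + y * (chooseZ (t - 1) ((r : ℤ) - 1) : R))
        = ∑ t ∈ Icc 1 (min (j - 1) (a (m + 1))),
            (((t - 1).choose r : R) + y * (chooseZ (t - 1) ((r : ℤ) - 1) : R)) := by
      refine Finset.sum_congr rfl fun t ht => ?_
      rw [mem_Icc] at ht
      rw [show t - a (m + 1) = 0 by omega, pow_zero, one_mul]
    rw [hfirst]
    have hsecond : ∑ t ∈ Icc (a (m + 1) + 1) (j - 1), x ^ (t - a (m + 1))
          * (((t - 1).choose r : R) + y * (chooseZ (t - 1) ((r : ℤ) - 1) : R))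
        = ∑ p ∈ Icc 1 (j - 1 - a (m + 1)), x ^ p
          * (((a (m + 1) + p - 1).choose r : R)
              + y * (chooseZ (a (m + 1) + p - 1) ((r : ℤ) - 1) : R)) := by
      refine Finset.sum_bij' (fun t _ => t - a (m + 1)) (fun p _ => a (m + 1) + p)
        ?_ ?_ ?_ ?_ ?_
      · intro t ht; rw [mem_Icc] at *; omega
      · intro p hp; rw [mem_Icc] at *; omega
      · intro t ht; rw [mem_Icc] at ht; omega
      · intro p hp; rw [mem_Icc] at hp; omega
      · intro t ht
        rw [mem_Icc] at ht
        rw [show a (m + 1) + (t - a (m + 1)) = t by omega]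
    rw [hsecond, Phi]
    rw [show ((r + 1 : ℕ) : ℤ) = (r : ℤ) + 1 by push_cast; ring]
    have e3 : ∑ p ∈ Icc 1 (j - 1 - a (m + 1)),
          x ^ p * ((chooseZ (a (m + 1) + p - 1) ((r : ℤ) + 1 - 1) : R)
            + y * (chooseZ (a (m + 1) + p - 1) ((r : ℤ) + 1 - 2) : R))
        = ∑ p ∈ Icc 1 (j - 1 - a (m + 1)), x ^ p
          * (((a (m + 1) + p - 1).choose r : R)
              + y * (chooseZ (a (m + 1) + p - 1) ((r : ℤ) - 1) : R)) := by
      refine Finset.sum_congr rfl fun p _ => ?_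
      rw [show (r : ℤ) + 1 - 1 = ((r : ℕ) : ℤ) by ring, chooseZ_coe,
        show (r : ℤ) + 1 - 2 = (r : ℤ) - 1 by ring]
    rw [e3]
    have e1 : ∑ t ∈ Icc 1 (min (j - 1) (a (m + 1))),
          (((t - 1).choose r : R) + y * (chooseZ (t - 1) ((r : ℤ) - 1) : R))
        = ((min (j - 1) (a (m + 1))).choose (r + 1) : R)
            + y * ∑ t ∈ Icc 1 (min (j - 1) (a (m + 1))), (chooseZ (t - 1) ((r : ℤ) - 1) : R) := by
      rw [Finset.sum_add_distrib, ← Finset.mul_sum]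
      congr 1
      rw [← Nat.cast_sum, hockey]
    rw [e1]
    have e2 : y * (if r = 0 then (1 : R) else 0)
          + (((min (j - 1) (a (m + 1))).choose (r + 1) : R)
            + y * ∑ t ∈ Icc 1 (min (j - 1) (a (m + 1))), (chooseZ (t - 1) ((r : ℤ) - 1) : R))
        = (chooseZ (min (j - 1) (a (m + 1))) ((r : ℤ) + 1) : R)
            + y * (chooseZ (min (j - 1) (a (m + 1))) ((r : ℤ) + 1 - 1) : R) := by
      rw [show (r : ℤ) + 1 = ((r + 1 : ℕ) : ℤ) by push_cast; ring, chooseZ_coe,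
        show ((r + 1 : ℕ) : ℤ) - 1 = ((r : ℕ) : ℤ) by push_cast; ring, chooseZ_coe]
      rcases Nat.eq_zero_or_pos r with hr0 | hrpos
      · subst hr0
        have hz : ∑ t ∈ Icc 1 (min (j - 1) (a (m + 1))),
            (chooseZ (t - 1) (((0 : ℕ) : ℤ) - 1) : R) = 0 := by
          refine Finset.sum_eq_zero fun t _ => ?_
          rw [chooseZ_neg _ (by norm_num : ((0 : ℕ) : ℤ) - 1 < 0)]
          simp
        rw [hz]
        simp
        ring
      · obtain ⟨s, rfl⟩ : ∃ s, r = s + 1 := ⟨r - 1, by omega⟩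
        rw [show ((s + 1 : ℕ) : ℤ) - 1 = ((s : ℕ) : ℤ) by push_cast; ring]
        have hs : ∑ t ∈ Icc 1 (min (j - 1) (a (m + 1))), (chooseZ (t - 1) ((s : ℕ) : ℤ) : R)
            = ((min (j - 1) (a (m + 1))).choose (s + 1) : R) := by
          have : ∀ t ∈ Icc 1 (min (j - 1) (a (m + 1))),
              (chooseZ (t - 1) ((s : ℕ) : ℤ) : R) = ((t - 1).choose s : R) := by
            intro t _; rw [chooseZ_coe]
          rw [Finset.sum_congr rfl this, ← Nat.cast_sum, hockey]
        rw [hs]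
        simp
    linear_combination e2

lemma claim1 (x y : R) (a : ℕ → ℕ) (ha : ∀ m, 1 ≤ m → a (m + 1) ≤ a m) :
    ∀ m j, (1 ≤ m → j ≤ a m + 1) →
      BB (wgt x y a) a m j
        = ∑ i ∈ Finset.range (m + 1),
            (-1 : R) ^ (m - i) * psi x y a (m - i) m j * BB (wgt x y a) a i 0 := by
  intro m
  induction m with
  | zero => intro j _; simp [BB, psi]
  | succ m ih =>
    intro j hj
    have hja : j ≤ a (m + 1) + 1 := hj (by omega)
    -- decompose BB (m+1) 0 over [0, j-1] ∪ [j, a (m+1)]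
    have hsplit : Icc 0 (a (m + 1)) = Finset.range j ∪ Icc j (a (m + 1)) := by
      ext t; simp [mem_Icc, Finset.mem_range, Finset.mem_union]; omega
    have hdisj : Disjoint (Finset.range j) (Icc j (a (m + 1))) := by
      rw [Finset.disjoint_left]; intro t h1 h2
      rw [Finset.mem_range] at h1; rw [mem_Icc] at h2; omega
    have hdec : BB (wgt x y a) a (m + 1) j
        = BB (wgt x y a) a (m + 1) 0
          - ∑ t ∈ Finset.range j, wgt x y a (m + 1) t * BB (wgt x y a) a m t := by
      show BB (wgt x y a) a (m + 1) j = BB (wgt x y a) a (m+1) 0 - _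
      rw [show BB (wgt x y a) a (m + 1) 0
          = ∑ t ∈ Icc 0 (a (m + 1)), wgt x y a (m + 1) t * BB (wgt x y a) a m t from rfl,
        hsplit, Finset.sum_union hdisj]
      rw [show BB (wgt x y a) a (m + 1) j
          = ∑ t ∈ Icc j (a (m + 1)), wgt x y a (m + 1) t * BB (wgt x y a) a m t from rfl]
      ring
    rw [hdec]
    -- expand the inner BB m t by the induction hypothesis
    have hinner : ∀ t ∈ Finset.range j,
        wgt x y a (m + 1) t * BB (wgt x y a) a m t
          = ∑ i ∈ Finset.range (m + 1),
              (-1 : R) ^ (m - i) * (wgt x y a (m + 1) t * psi x y a (m - i) m t)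
                * BB (wgt x y a) a i 0 := by
      intro t ht
      rw [Finset.mem_range] at ht
      rw [ih t (fun hm1 => by
        have := ha m hm1
        omega), Finset.mul_sum]
      refine Finset.sum_congr rfl fun i _ => ?_
      ring
    rw [Finset.sum_congr rfl hinner, Finset.sum_comm]
    have hpsi : ∀ i ∈ Finset.range (m + 1),
        ∑ t ∈ Finset.range j,
            (-1 : R) ^ (m - i) * (wgt x y a (m + 1) t * psi x y a (m - i) m t)
              * BB (wgt x y a) a i 0
          = (-1 : R) ^ (m - i) * psi x y a (m - i + 1) (m + 1) j * BB (wgt x y a) a i 0 := by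
      intro i _
      rw [show psi x y a (m - i + 1) (m + 1) j
          = ∑ t ∈ Finset.range j, wgt x y a (m + 1) t * psi x y a (m - i) m t from rfl]
      rw [Finset.mul_sum, Finset.sum_mul]
    rw [Finset.sum_congr rfl hpsi]
    -- assemble
    conv_rhs => rw [Finset.sum_range_succ]
    rw [Nat.sub_self, pow_zero, one_mul, show psi x y a 0 (m + 1) j = 1 from rfl, one_mul]
    have hrest : ∀ i ∈ Finset.range (m + 1),
        (-1 : R) ^ (m + 1 - i) * psi x y a (m + 1 - i) (m + 1) j * BB (wgt x y a) a i 0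
          = -((-1 : R) ^ (m - i) * psi x y a (m - i + 1) (m + 1) j * BB (wgt x y a) a i 0) := by
      intro i hi
      rw [Finset.mem_range] at hi
      rw [show m + 1 - i = (m - i) + 1 by omega, pow_succ]
      ring
    rw [Finset.sum_congr rfl hrest, Finset.sum_neg_distrib]
    ring

lemma key_zero (x y : R) (a : ℕ → ℕ) (ha : ∀ m, 1 ≤ m → a (m + 1) ≤ a m) (m : ℕ) (hm : 1 ≤ m) :
    (0 : R) = ∑ i ∈ Finset.range (m + 1),
        (-1 : R) ^ (m - i) * psi x y a (m - i) m (a m + 1) * BB (wgt x y a) a i 0 := by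
  rw [← claim1 x y a ha m (a m + 1) (fun _ => le_rfl)]
  obtain ⟨m', rfl⟩ : ∃ m', m = m' + 1 := ⟨m - 1, by omega⟩
  rw [show BB (wgt x y a) a (m' + 1) (a (m' + 1) + 1)
      = ∑ t ∈ Icc (a (m' + 1) + 1) (a (m' + 1)), wgt x y a (m' + 1) t * BB (wgt x y a) a m' t
      from rfl]
  rw [Finset.Icc_eq_empty (by omega)]
  simp

lemma succAbove_val {n : ℕ} (i : Fin (n + 1)) (t : Fin n) :
    ((i.succAbove t : Fin (n + 1)) : ℕ) = if (t : ℕ) < (i : ℕ) then (t : ℕ) else (t : ℕ) + 1 := by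
  rcases Nat.lt_or_ge (t : ℕ) (i : ℕ) with h | h
  · rw [if_pos h, Fin.succAbove, if_pos]
    · rfl
    · rw [Fin.lt_def]; simpa using h
  · rw [if_neg (not_lt.2 h), Fin.succAbove, if_neg]
    · rfl
    · rw [Fin.lt_def]; simp only [Fin.coe_castSucc]; omega

lemma det_minor {n : ℕ} (A : Matrix (Fin (n + 1)) (Fin (n + 1)) R)
    (h1 : ∀ i j : Fin (n + 1), (j : ℕ) + 1 < (i : ℕ) → A i j = 0)
    (h2 : ∀ i j : Fin (n + 1), (i : ℕ) = (j : ℕ) + 1 → A i j = 1)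
    (i : Fin (n + 1)) :
    (A.submatrix i.succAbove Fin.castSucc).det
      = (A.submatrix (fun t : Fin (i : ℕ) => Fin.castLE i.isLt.le t)
          (fun t : Fin (i : ℕ) => Fin.castLE i.isLt.le t)).det := by
  have hi0 : (i : ℕ) ≤ n := by omega
  let e : Fin (i : ℕ) ⊕ Fin (n - (i : ℕ)) ≃ Fin n :=
    finSumFinEquiv.trans (finCongr (by omega))
  have he_inl : ∀ u : Fin (i : ℕ), ((e (Sum.inl u) : Fin n) : ℕ) = (u : ℕ) := by
    intro u; simp [e]
  have he_inr : ∀ u : Fin (n - (i : ℕ)), ((e (Sum.inr u) : Fin n) : ℕ) = (i : ℕ) + (u : ℕ) := by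
    intro u; simp [e]
  rw [← Matrix.det_submatrix_equiv_self e]
  have key : ((A.submatrix i.succAbove Fin.castSucc).submatrix e e)
      = Matrix.fromBlocks
          (A.submatrix (fun t : Fin (i : ℕ) => Fin.castLE i.isLt.le t)
            (fun t : Fin (i : ℕ) => Fin.castLE i.isLt.le t))
          (Matrix.of fun (u : Fin (i : ℕ)) (v : Fin (n - (i : ℕ))) =>
            A (Fin.castLE i.isLt.le u) (⟨(i : ℕ) + (v : ℕ), by omega⟩ : Fin (n + 1)))
          0
          (Matrix.of fun (u v : Fin (n - (i : ℕ))) =>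
            A (⟨(i : ℕ) + (u : ℕ) + 1, by omega⟩ : Fin (n + 1))
              (⟨(i : ℕ) + (v : ℕ), by omega⟩ : Fin (n + 1))) := by
    ext s t
    cases s with
    | inl u =>
      have hr : i.succAbove (e (Sum.inl u)) = Fin.castLE i.isLt.le u := by
        apply Fin.ext
        rw [succAbove_val, he_inl, if_pos (by simpa using u.isLt)]
        rfl
      cases t with
      | inl v =>
        have hc : Fin.castSucc (e (Sum.inl v)) = Fin.castLE i.isLt.le v := by
          apply Fin.ext
          simp [he_inl]
        simp only [Matrix.submatrix_apply, Matrix.fromBlocks_apply₁₁, hr, hc]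
      | inr v =>
        have hc : Fin.castSucc (e (Sum.inr v)) = (⟨(i : ℕ) + (v : ℕ), by omega⟩ : Fin (n + 1)) := by
          apply Fin.ext
          simp [he_inr]
        simp only [Matrix.submatrix_apply, Matrix.fromBlocks_apply₁₂, Matrix.of_apply, hr, hc]
    | inr u =>
      have hr : ((i.succAbove (e (Sum.inr u))) : ℕ) = (i : ℕ) + (u : ℕ) + 1 := by
        rw [succAbove_val, he_inr, if_neg (by omega)]
      cases t with
      | inl v =>
        simp only [Matrix.submatrix_apply, Matrix.fromBlocks_apply₂₁, Matrix.zero_apply]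
        apply h1
        have hv : ((Fin.castSucc (e (Sum.inl v)) : Fin (n + 1)) : ℕ) = (v : ℕ) := by
          simp [he_inl]
        rw [hv, hr]
        have := v.isLt
        omega
      | inr v =>
        have hr' : i.succAbove (e (Sum.inr u)) = (⟨(i : ℕ) + (u : ℕ) + 1, by omega⟩ : Fin (n + 1)) := by
          apply Fin.ext; exact hr
        have hc : Fin.castSucc (e (Sum.inr v)) = (⟨(i : ℕ) + (v : ℕ), by omega⟩ : Fin (n + 1)) := by
          apply Fin.ext
          simp [he_inr]
        simp only [Matrix.submatrix_apply, Matrix.fromBlocks_apply₂₂, Matrix.of_apply, hr', hc]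
  rw [key, Matrix.det_fromBlocks_zero₂₁]
  have hD : (Matrix.of fun (u v : Fin (n - (i : ℕ))) =>
      A (⟨(i : ℕ) + (u : ℕ) + 1, by omega⟩ : Fin (n + 1))
        (⟨(i : ℕ) + (v : ℕ), by omega⟩ : Fin (n + 1))).det = 1 := by
    rw [Matrix.det_of_upperTriangular]
    · apply Finset.prod_eq_one
      intro u _
      apply h2
      rfl
    · intro u v huv
      have hvu : (v : ℕ) < (u : ℕ) := huv
      apply h1
      show ((⟨(i : ℕ) + (v : ℕ), by omega⟩ : Fin (n + 1)) : ℕ) + 1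
          < ((⟨(i : ℕ) + (u : ℕ) + 1, by omega⟩ : Fin (n + 1)) : ℕ)
      simp only []
      omega
  rw [hD, mul_one]

lemma hess_det {n : ℕ} (A : Matrix (Fin (n + 1)) (Fin (n + 1)) R)
    (h1 : ∀ i j : Fin (n + 1), (j : ℕ) + 1 < (i : ℕ) → A i j = 0)
    (h2 : ∀ i j : Fin (n + 1), (i : ℕ) = (j : ℕ) + 1 → A i j = 1) :
    A.det = ∑ i : Fin (n + 1), (-1 : R) ^ ((i : ℕ) + n) * A i (Fin.last n)
      * (A.submatrix (fun t : Fin (i : ℕ) => Fin.castLE i.isLt.le t)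
          (fun t : Fin (i : ℕ) => Fin.castLE i.isLt.le t)).det := by
  rw [Matrix.det_succ_column A (Fin.last n)]
  refine Finset.sum_congr rfl fun i _ => ?_
  rw [show ((Fin.last n : Fin (n + 1)) : ℕ) = n from rfl]
  rw [Fin.succAbove_last, det_minor A h1 h2 i]

lemma sum_chains (w : ℕ → ℕ → R) (b : ℕ → ℕ) :
    ∀ (k c : ℕ),
      ∑ C ∈ (Fintype.piFinset fun i : Fin k => Finset.Icc c (b ((i : ℕ) + 1))).filter
          (fun C => ∀ i j : Fin k, i ≤ j → C j ≤ C i),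
        ∏ i : Fin k, w ((i : ℕ) + 1) (C i) = BB w b k c := by
  intro k
  induction k with
  | zero =>
    intro c
    rw [show BB w b 0 c = 1 from rfl]
    rw [Finset.filter_true_of_mem (fun _ _ i => i.elim0)]
    rw [show (Fintype.piFinset fun i : Fin 0 => Finset.Icc c (b ((i : ℕ) + 1)))
        = {fun i : Fin 0 => i.elim0} from Finset.eq_singleton_iff_unique_mem.2
          ⟨by rw [Fintype.mem_piFinset]; exact fun i => i.elim0, fun g _ => funext fun i => i.elim0⟩]
    rw [Finset.sum_singleton]
    exact Finset.prod_of_isEmpty _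
  | succ k ih =>
    intro c
    rw [show BB w b (k + 1) c
        = ∑ j ∈ Finset.Icc c (b (k + 1)), w (k + 1) j * BB w b k j from rfl]
    have hih : ∀ j, w (k + 1) j * BB w b k j
        = ∑ C ∈ (Fintype.piFinset fun i : Fin k => Finset.Icc j (b ((i : ℕ) + 1))).filter
            (fun C => ∀ i j : Fin k, i ≤ j → C j ≤ C i),
          w (k + 1) j * ∏ i : Fin k, w ((i : ℕ) + 1) (C i) := by
      intro j
      rw [← Finset.mul_sum, ih j]
    rw [Finset.sum_congr rfl fun j _ => hih j, Finset.sum_sigma']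
    refine Finset.sum_bij'
      (fun (C : Fin (k + 1) → ℕ) (_ : C ∈ _) =>
        (⟨C (Fin.last k), Fin.init C⟩ : Σ _ : ℕ, Fin k → ℕ))
      (fun (p : Σ _ : ℕ, Fin k → ℕ) (_ : p ∈ _) => (Fin.snoc p.2 p.1 : Fin (k + 1) → ℕ))
      ?_ ?_ ?_ ?_ ?_
    -- forward membership
    · intro C hC
      rw [Finset.mem_filter, Fintype.mem_piFinset] at hC
      obtain ⟨hmem, hmono⟩ := hC
      rw [Finset.mem_sigma]
      refine ⟨by simpa using hmem (Fin.last k), ?_⟩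
      rw [Finset.mem_filter, Fintype.mem_piFinset]
      constructor
      · intro i
        rw [Finset.mem_Icc]
        have h1 := hmem (Fin.castSucc i)
        rw [Finset.mem_Icc] at h1
        have h2 : C (Fin.last k) ≤ C (Fin.castSucc i) :=
          hmono (Fin.castSucc i) (Fin.last k)
            (Fin.le_last _)
        exact ⟨h2, by simpa [Fin.init] using h1.2⟩
      · intro i i' hii'
        exact hmono (Fin.castSucc i) (Fin.castSucc i')
          (by rw [Fin.le_def] at hii' ⊢; simpa using hii')
    -- backward membership
    · intro p hp
      rw [Finset.mem_sigma, Finset.mem_filter, Fintype.mem_piFinset] at hp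
      obtain ⟨hj, hD, hmono⟩ := hp
      rw [Finset.mem_Icc] at hj
      have hsnoc : ∀ (i : Fin (k + 1)) (h : (i : ℕ) < k),
          (Fin.snoc p.2 p.1 : Fin (k + 1) → ℕ) i = p.2 ⟨(i : ℕ), h⟩ := by
        intro i h
        exact Fin.snoc_castSucc (α := fun _ : Fin (k + 1) => ℕ) (x := p.1) (p := p.2)
          (i := ⟨(i : ℕ), h⟩)
      have hlastv : ∀ (i : Fin (k + 1)), (i : ℕ) = k →
          (Fin.snoc p.2 p.1 : Fin (k + 1) → ℕ) i = p.1 := by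
        intro i h
        have e : i = Fin.last k := Fin.ext h
        rw [e, Fin.snoc_last]
      have hDlow : ∀ t : Fin k, p.1 ≤ p.2 t ∧ p.2 t ≤ b ((t : ℕ) + 1) := by
        intro t
        have := hD t
        rw [Finset.mem_Icc] at this
        exact this
      rw [Finset.mem_filter, Fintype.mem_piFinset]
      constructor
      · intro i
        rw [Finset.mem_Icc]
        by_cases h : (i : ℕ) < k
        · rw [hsnoc i h]
          have := hDlow ⟨(i : ℕ), h⟩
          exact ⟨by omega, this.2⟩
        · have hik : (i : ℕ) = k := by have := i.isLt; omega
          rw [hlastv i hik, hik]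
          exact hj
      · intro i i' hii'
        rw [Fin.le_def] at hii'
        by_cases h' : (i' : ℕ) < k
        · have h : (i : ℕ) < k := by omega
          rw [hsnoc i h, hsnoc i' h']
          exact hmono ⟨(i : ℕ), h⟩ ⟨(i' : ℕ), h'⟩ (by rw [Fin.le_def]; exact hii')
        · have hik : (i' : ℕ) = k := by have := i'.isLt; omega
          rw [hlastv i' hik]
          by_cases h : (i : ℕ) < k
          · rw [hsnoc i h]
            exact (hDlow ⟨(i : ℕ), h⟩).1
          · rw [hlastv i (by have := i.isLt; omega)]
    -- left inverse
    · intro C _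
      dsimp only
      exact Fin.snoc_init_self C
    -- right inverse
    · intro p hp
      obtain ⟨j, D⟩ := p
      dsimp only
      rw [Fin.snoc_last, Fin.init_snoc]
    -- summand equality
    · intro C _
      dsimp only
      rw [Fin.prod_univ_castSucc, mul_comm]
      rfl

def ent (x y : R) (a : ℕ → ℕ) (i j : ℕ) : R :=
  (chooseZ (a (j + 2)) ((j : ℤ) - (i : ℤ) + 1) : R)
    + y * (chooseZ (a (j + 2)) ((j : ℤ) - (i : ℤ)) : R)
    + ∑ p ∈ Finset.Icc 1 (a (j + 1) - a (j + 2)),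
        x ^ p * ((chooseZ (a (j + 2) + p - 1) ((j : ℤ) - (i : ℤ)) : R)
          + y * (chooseZ (a (j + 2) + p - 1) ((j : ℤ) - (i : ℤ) - 1) : R))

lemma ent_zero (x y : R) (a : ℕ → ℕ) (i j : ℕ) (h : j + 1 < i) : ent x y a i j = 0 := by
  have hz1 : (chooseZ (a (j + 2)) ((j : ℤ) - (i : ℤ) + 1)) = 0 := chooseZ_neg _ (by omega)
  have hz2 : (chooseZ (a (j + 2)) ((j : ℤ) - (i : ℤ))) = 0 := chooseZ_neg _ (by omega)
  have hz3 : ∀ p ∈ Finset.Icc 1 (a (j + 1) - a (j + 2)),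
      x ^ p * ((chooseZ (a (j + 2) + p - 1) ((j : ℤ) - (i : ℤ)) : R)
        + y * (chooseZ (a (j + 2) + p - 1) ((j : ℤ) - (i : ℤ) - 1) : R)) = 0 := by
    intro p _
    rw [chooseZ_neg _ (by omega : (j : ℤ) - (i : ℤ) < 0),
      chooseZ_neg _ (by omega : (j : ℤ) - (i : ℤ) - 1 < 0)]
    norm_num
  rw [ent, hz1, hz2, Finset.sum_congr rfl hz3]
  simp

lemma ent_one (x y : R) (a : ℕ → ℕ) (i j : ℕ) (h : i = j + 1) : ent x y a i j = 1 := by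
  subst h
  have c1 : (j : ℤ) - ((j + 1 : ℕ) : ℤ) + 1 = ((0 : ℕ) : ℤ) := by push_cast; ring
  have hlt : (j : ℤ) - ((j + 1 : ℕ) : ℤ) < 0 := by push_cast; omega
  have hlt2 : (j : ℤ) - ((j + 1 : ℕ) : ℤ) - 1 < 0 := by push_cast; omega
  have hz3 : ∀ p ∈ Finset.Icc 1 (a (j + 1) - a (j + 2)),
      x ^ p * ((chooseZ (a (j + 2) + p - 1) ((j : ℤ) - ((j + 1 : ℕ) : ℤ)) : R)
        + y * (chooseZ (a (j + 2) + p - 1) ((j : ℤ) - ((j + 1 : ℕ) : ℤ) - 1) : R)) = 0 := by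
    intro p _
    rw [chooseZ_neg _ hlt, chooseZ_neg _ hlt2]
    norm_num
  rw [ent, c1, chooseZ_coe, chooseZ_neg _ hlt, Finset.sum_congr rfl hz3]
  simp

lemma ent_eq_psi (x y : R) (a : ℕ → ℕ) (ha : ∀ m, 1 ≤ m → a (m + 1) ≤ a m)
    (m i0 : ℕ) (hi : i0 ≤ m) :
    ent x y a i0 m = psi x y a (m + 1 - i0) (m + 1) (a (m + 1) + 1) := by
  rw [psi_eq_Phi x y a ha (m + 1 - i0) (m + 1) (a (m + 1) + 1) (by omega) (by omega) le_rfl]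
  rw [Phi, show m + 1 + 1 = m + 2 from rfl, show a (m + 1) + 1 - 1 = a (m + 1) from rfl]
  rw [show min (a (m + 1)) (a (m + 2)) = a (m + 2) from by
    have h2 := ha (m + 1) (by omega)
    rw [show m + 1 + 1 = m + 2 from rfl] at h2
    omega]
  have e2 : ((m + 1 - i0 : ℕ) : ℤ) - 1 = (m : ℤ) - (i0 : ℤ) := by omega
  have e3 : ((m + 1 - i0 : ℕ) : ℤ) - 2 = (m : ℤ) - (i0 : ℤ) - 1 := by omega
  have e1 : ((m + 1 - i0 : ℕ) : ℤ) = (m : ℤ) - (i0 : ℤ) + 1 := by omega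
  rw [e2, e3, e1, ent]

lemma det_topLeft (x y : R) (a : ℕ → ℕ) (ha : ∀ m, 1 ≤ m → a (m + 1) ≤ a m) :
    ∀ (m k : ℕ) (h : m ≤ k) (N : Matrix (Fin k) (Fin k) R),
      (∀ i j : Fin k, N i j = ent x y a (i : ℕ) (j : ℕ)) →
      (N.submatrix (fun t : Fin m => Fin.castLE h t) (fun t : Fin m => Fin.castLE h t)).det
        = BB (wgt x y a) a m 0 := by
  intro m
  induction m using Nat.strong_induction_on with
  | _ m IH =>
    intro k h N hN
    match m, IH, h with
    | 0, _, h =>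
      rw [show BB (wgt x y a) a 0 0 = 1 from rfl]
      exact Matrix.det_fin_zero
    | m + 1, IH, h =>
      set A : Matrix (Fin (m + 1)) (Fin (m + 1)) R :=
        N.submatrix (fun t : Fin (m + 1) => Fin.castLE h t) (fun t : Fin (m + 1) => Fin.castLE h t)
        with hAdef
      have hA : ∀ i j : Fin (m + 1), A i j = ent x y a (i : ℕ) (j : ℕ) := by
        intro i j
        rw [hAdef, Matrix.submatrix_apply, hN]
        rfl
      have h1 : ∀ i j : Fin (m + 1), (j : ℕ) + 1 < (i : ℕ) → A i j = 0 := by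
        intro i j hij
        rw [hA]
        exact ent_zero x y a _ _ hij
      have h2 : ∀ i j : Fin (m + 1), (i : ℕ) = (j : ℕ) + 1 → A i j = 1 := by
        intro i j hij
        rw [hA]
        exact ent_one x y a _ _ hij
      rw [hess_det A h1 h2]
      have hterm : ∀ i : Fin (m + 1),
          (-1 : R) ^ ((i : ℕ) + m) * A i (Fin.last m)
            * (A.submatrix (fun t : Fin (i : ℕ) => Fin.castLE i.isLt.le t)
                (fun t : Fin (i : ℕ) => Fin.castLE i.isLt.le t)).det
          = (-1 : R) ^ (m - (i : ℕ)) * psi x y a (m + 1 - (i : ℕ)) (m + 1) (a (m + 1) + 1)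
              * BB (wgt x y a) a (i : ℕ) 0 := by
        intro i
        have hsub : (A.submatrix (fun t : Fin (i : ℕ) => Fin.castLE i.isLt.le t)
              (fun t : Fin (i : ℕ) => Fin.castLE i.isLt.le t))
            = N.submatrix (fun t : Fin (i : ℕ) => Fin.castLE (by omega : (i : ℕ) ≤ k) t)
                (fun t : Fin (i : ℕ) => Fin.castLE (by omega : (i : ℕ) ≤ k) t) := rfl
        rw [hsub, IH (i : ℕ) (by omega) k (by omega) N hN]
        rw [hA, show ((Fin.last m : Fin (m + 1)) : ℕ) = m from rfl,
          ent_eq_psi x y a ha m (i : ℕ) (by omega)]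
        congr 2
        rw [show (i : ℕ) + m = (m - (i : ℕ)) + 2 * (i : ℕ) by omega, pow_add, pow_mul]
        simp
      rw [Finset.sum_congr rfl fun i _ => hterm i]
      rw [Fin.sum_univ_eq_sum_range (fun i => (-1 : R) ^ (m - i)
        * psi x y a (m + 1 - i) (m + 1) (a (m + 1) + 1) * BB (wgt x y a) a i 0) (m + 1)]
      have hz := key_zero x y a ha (m + 1) (by omega)
      rw [Finset.sum_range_succ, Nat.sub_self, pow_zero, one_mul,
        show psi x y a 0 (m + 1) (a (m + 1) + 1) = 1 from rfl, one_mul] at hz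
      have hsame : ∀ i ∈ Finset.range (m + 1),
          (-1 : R) ^ (m + 1 - i) * psi x y a (m + 1 - i) (m + 1) (a (m + 1) + 1)
              * BB (wgt x y a) a i 0
            = -((-1 : R) ^ (m - i) * psi x y a (m + 1 - i) (m + 1) (a (m + 1) + 1)
              * BB (wgt x y a) a i 0) := by
        intro i hi
        rw [Finset.mem_range] at hi
        rw [show m + 1 - i = (m - i) + 1 by omega, pow_succ]
        ring
      rw [Finset.sum_congr rfl hsame, Finset.sum_neg_distrib] at hz
      linear_combination hz

end Stmt9Aux


/-- The 1-based parts `λ_1, …, λ_k` of the partition `lam : Fin k → ℕ`,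
extended by `0` outside `{1, …, k}` (so in particular `λ_{k+1} = 0`). -/
def lamE {k : ℕ} (lam : Fin k → ℕ) (t : ℕ) : ℕ :=
  if h : 1 ≤ t ∧ t ≤ k then lam ⟨t - 1, by omega⟩ else 0

/-- The entry `M_{ij}` of the matrix of the determinantal identity.  Here
`i j : Fin k` are 0-based (the paper's 1-based indices are `i+1`, `j+1`):
`M_{ij} = C(λ_{j+1}, j-i+1) + y C(λ_{j+1}, j-i)
  + Σ_{p=1}^{λ_j-λ_{j+1}} x^p (C(λ_{j+1}+p-1, j-i) + y C(λ_{j+1}+p-1, j-i-1))`. -/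
def entryM {R : Type} [CommRing R] (x y : R) {k : ℕ} (lam : Fin k → ℕ) (i j : Fin k) : R :=
  (chooseZ (lamE lam ((j : ℕ) + 2)) (((j : ℕ) : ℤ) - ((i : ℕ) : ℤ) + 1) : ℕ)
    + y * ((chooseZ (lamE lam ((j : ℕ) + 2)) (((j : ℕ) : ℤ) - ((i : ℕ) : ℤ)) : ℕ) : R)
    + ∑ p ∈ Finset.Icc 1 (lamE lam ((j : ℕ) + 1) - lamE lam ((j : ℕ) + 2)),
        x ^ p * (((chooseZ (lamE lam ((j : ℕ) + 2) + p - 1) (((j : ℕ) : ℤ) - ((i : ℕ) : ℤ)) : ℕ) : R)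
          + y * ((chooseZ (lamE lam ((j : ℕ) + 2) + p - 1) (((j : ℕ) : ℤ) - ((i : ℕ) : ℤ) - 1) : ℕ) : R))

/-- **Generating-function form of the main determinantal theorem**: for a
partition `λ` with at most `k` parts (and `λ_{k+1} = 0`),
`Σ_C x^{Σ_i max(C_i - λ_{i+1}, 0)} y^{#{i : C_i = 0}} = det M`, the sum being
over all tuples `(C_1, …, C_k)` with `λ_i ≥ C_i ≥ C_{i+1} ≥ 0`, i.e. over all
partitions with at most `k` parts contained in `λ`. -/
theorem stmt9 (R : Type) [CommRing R] (x y : R) (k : ℕ) (lam : Fin k → ℕ)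
    (hlam : ∀ i j : Fin k, i ≤ j → lam j ≤ lam i) :
    (∑ C ∈ (Fintype.piFinset fun i : Fin k => range (lam i + 1)).filter
        (fun C => ∀ i j : Fin k, i ≤ j → C j ≤ C i),
      x ^ (∑ i : Fin k, (C i - lamE lam ((i : ℕ) + 2)))
        * y ^ (univ.filter fun i : Fin k => C i = 0).card)
      = Matrix.det (Matrix.of fun i j : Fin k => entryM x y lam i j) := by
  classical
  have hk : ∀ i : Fin k, lamE lam ((i : ℕ) + 1) = lam i := by
    intro i
    rw [lamE, dif_pos ⟨by omega, by omega⟩]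
    exact congrArg lam (Fin.ext rfl)
  have ha : ∀ m, 1 ≤ m → lamE lam (m + 1) ≤ lamE lam m := by
    intro m hm
    by_cases h1 : m + 1 ≤ k
    · rw [lamE, lamE, dif_pos ⟨by omega, h1⟩, dif_pos ⟨hm, by omega⟩]
      exact hlam ⟨m - 1, by omega⟩ ⟨m + 1 - 1, by omega⟩ (Fin.mk_le_mk.mpr (by omega))
    · rw [show lamE lam (m + 1) = 0 from by rw [lamE, dif_neg (by omega)]]
      exact Nat.zero_le _
  have hset : (Fintype.piFinset fun i : Fin k => range (lam i + 1))
      = Fintype.piFinset fun i : Fin k => Finset.Icc 0 (lamE lam ((i : ℕ) + 1)) := by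
    congr 1
    funext i
    rw [hk i]
    ext t
    simp [Nat.lt_succ_iff]
  have hsummand : ∀ C : Fin k → ℕ,
      x ^ (∑ i : Fin k, (C i - lamE lam ((i : ℕ) + 2)))
          * y ^ (univ.filter fun i : Fin k => C i = 0).card
        = ∏ i : Fin k, Stmt9Aux.wgt x y (lamE lam) ((i : ℕ) + 1) (C i) := by
    intro C
    rw [← Finset.prod_pow_eq_pow_sum]
    rw [show y ^ (univ.filter fun i : Fin k => C i = 0).card
        = ∏ i : Fin k, (if C i = 0 then y else 1) from by
      rw [← Finset.prod_const, Finset.prod_filter]]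
    rw [← Finset.prod_mul_distrib]
    rfl
  rw [hset, Finset.sum_congr rfl fun C _ => hsummand C,
    Stmt9Aux.sum_chains (Stmt9Aux.wgt x y (lamE lam)) (lamE lam) k 0]
  have hdet : Matrix.det (Matrix.of fun i j : Fin k => entryM x y lam i j)
      = ((Matrix.of fun i j : Fin k => entryM x y lam i j).submatrix
          (fun t : Fin k => Fin.castLE le_rfl t) (fun t : Fin k => Fin.castLE le_rfl t)).det := by
    congr 1
  rw [hdet, Stmt9Aux.det_topLeft x y (lamE lam) ha k k le_rfl
    (Matrix.of fun i j : Fin k => entryM x y lam i j) (fun i j => rfl)]
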